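/- (Two-legged symmetry identity) For any partitions α and β and |q| < 1, one has s_α(q^{−ρ}) s_β(q^{−α−ρ}) = s_α(q^{−β−ρ}) s_β(q^{−ρ}), where q^{−ρ} = (q^{i−1/2})_{i≥1} and q^{−α−ρ} = (q^{−α_i + i − 1/2})_{i≥1}. -/

import Mathlib

open scoped Classical

/-- The ring of symmetric functions, realized inside formal power series in x_0, x_1, …. -/
abbrev SymFn := MvPowerSeries ℕ ℚ

/-- Semistandard Young tableaux of skew shape f/g (0-indexed rows/columns, entries in ℕ). -/
def IsSSYT (f g : ℕ → ℕ) (T : ℕ × ℕ → ℕ) : Prop :=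
  (∀ i j, g i ≤ j → j + 1 < f i → T (i, j) ≤ T (i, j + 1)) ∧
  (∀ i j, g i ≤ j → j < f i → g (i + 1) ≤ j → j < f (i + 1) → T (i, j) < T (i + 1, j)) ∧
  (∀ i j, ¬(g i ≤ j ∧ j < f i) → T (i, j) = 0)

/-- The tableau T has content d : its entries realize the monomial x^d. -/
def HasContent (f g : ℕ → ℕ) (T : ℕ × ℕ → ℕ) (d : ℕ →₀ ℕ) : Prop :=
  ∀ v : ℕ, d v = Nat.card {c : ℕ × ℕ | g c.1 ≤ c.2 ∧ c.2 < f c.1 ∧ T c = v}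

/-- The skew Schur function s_{f/g} = Σ_T x^T (0 when g ⊄ f). -/
noncomputable def skewSchur (f g : ℕ → ℕ) : SymFn :=
  fun d => if ∀ i, g i ≤ f i
    then (Nat.card {T : ℕ × ℕ → ℕ // IsSSYT f g T ∧ HasContent f g T d} : ℚ) else 0

/-- The Schur function s_f. -/
noncomputable def schur (f : ℕ → ℕ) : SymFn := skewSchur f fun _ => 0

/-- Evaluation of a symmetric function at complex values x_i (as a convergent sum). -/
noncomputable def evalS (F : SymFn) (x : ℕ → ℂ) : ℂ :=
  ∑' d : ℕ →₀ ℕ, (F d : ℂ) * ∏ i ∈ d.support, x i ^ d i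


namespace TwoLeg
open Finset

variable {f : ℕ → ℕ} {N n : ℕ} {T : ℕ × ℕ → ℕ}

def cells (f : ℕ → ℕ) (N : ℕ) : Finset (ℕ × ℕ) :=
  (Finset.range N ×ˢ Finset.range (f 0 + 1)).filter fun c => c.2 < f c.1

lemma mem_cells (hf : Antitone f) (hN : ∀ i, N ≤ i → f i = 0) {c : ℕ × ℕ} :
    c ∈ cells f N ↔ c.2 < f c.1 := by
  constructor
  · exact fun h => (Finset.mem_filter.1 h).2
  · intro h
    refine Finset.mem_filter.2 ⟨Finset.mem_product.2 ⟨Finset.mem_range.2 ?_, Finset.mem_range.2 ?_⟩, h⟩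
    · by_contra hc
      push_neg at hc
      rw [hN _ hc] at h; omega
    · have := hf (Nat.zero_le c.1); omega

lemma ssyt_row (hT : IsSSYT f (fun _ => 0) T) {i j : ℕ} (h : j + 1 < f i) :
    T (i, j) ≤ T (i, j + 1) := hT.1 i j (Nat.zero_le _) h

lemma ssyt_col (hT : IsSSYT f (fun _ => 0) T) {i j : ℕ} (h1 : j < f i) (h2 : j < f (i + 1)) :
    T (i, j) < T (i + 1, j) := hT.2.1 i j (Nat.zero_le _) h1 (Nat.zero_le _) h2

lemma ssyt_zero (hT : IsSSYT f (fun _ => 0) T) {i j : ℕ} (h : ¬ j < f i) : T (i, j) = 0 :=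
  hT.2.2 i j fun hc => h hc.2

lemma ssyt_row_mono (hT : IsSSYT f (fun _ => 0) T) {i j k : ℕ} (hjk : j ≤ k) (hk : k < f i) :
    T (i, j) ≤ T (i, k) := by
  obtain ⟨d, rfl⟩ := Nat.exists_eq_add_of_le hjk
  clear hjk
  induction d with
  | zero => exact le_refl _
  | succ m ih =>
      have h1 : j + m < f i := by omega
      have h2 := ssyt_row hT (show (j + m) + 1 < f i by omega)
      have h3 := ih h1
      show T (i, j) ≤ T (i, j + m + 1)
      omega

lemma ssyt_entry_ge_row (hf : Antitone f) (hT : IsSSYT f (fun _ => 0) T) :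
    ∀ i j, j < f i → i ≤ T (i, j) := by
  intro i
  induction i with
  | zero => exact fun j _ => Nat.zero_le _
  | succ k ih =>
      intro j hj
      have hk : j < f k := lt_of_lt_of_le hj (hf (Nat.le_succ k))
      have h1 := hT.2.1 k j (Nat.zero_le _) hk (Nat.zero_le _) hj
      have h2 := ih j hk
      omega

noncomputable def Tabs (f : ℕ → ℕ) (N n : ℕ) : Finset ((ℕ × ℕ) → ℕ) :=
  (((cells f N).pi fun _ => Finset.range n).image
    (fun p c => if h : c ∈ cells f N then p c h else 0)).filter (IsSSYT f fun _ => 0)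

lemma mem_Tabs (hf : Antitone f) (hN : ∀ i, N ≤ i → f i = 0) {T : (ℕ × ℕ) → ℕ} :
    T ∈ Tabs f N n ↔ IsSSYT f (fun _ => 0) T ∧ ∀ c ∈ cells f N, T c < n := by
  constructor
  · intro h
    obtain ⟨h1, h2⟩ := Finset.mem_filter.1 h
    refine ⟨h2, ?_⟩
    obtain ⟨p, hp, rfl⟩ := Finset.mem_image.1 h1
    intro c hc
    simp only [hc, dif_pos]
    exact Finset.mem_range.1 ((Finset.mem_pi.1 hp) c hc)
  · rintro ⟨h1, h2⟩
    refine Finset.mem_filter.2 ⟨Finset.mem_image.2 ⟨fun c _ => T c, ?_, ?_⟩, h1⟩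
    · exact Finset.mem_pi.2 fun c hc => Finset.mem_range.2 (h2 c hc)
    · funext c
      by_cases hc : c ∈ cells f N
      · simp [hc]
      · simp only [hc, dif_neg, not_false_iff]
        exact (ssyt_zero h1 fun hlt => hc ((mem_cells hf hN).2 hlt)).symm

noncomputable def schurP (f : ℕ → ℕ) (N n : ℕ) (x : ℕ → ℂ) : ℂ :=
  ∑ T ∈ Tabs f N n, ∏ c ∈ cells f N, x (T c)

noncomputable def alt (f : ℕ → ℕ) (n : ℕ) (x : ℕ → ℂ) : ℂ :=
  Matrix.det (Matrix.of fun i j : Fin n => x i ^ (f j + (n - 1 - (j : ℕ))))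

/-! ### strips -/

noncomputable def stripSet (f : ℕ → ℕ) (n : ℕ) : Finset (Fin n → ℕ) :=
  Fintype.piFinset fun j : Fin n => Finset.Icc (f ((j : ℕ) + 1)) (f (j : ℕ))

def hsh (n : ℕ) (r : Fin n → ℕ) : ℕ → ℕ := fun i => if h : i < n then r ⟨i, h⟩ else 0

lemma mem_stripSet {r : Fin n → ℕ} :
    r ∈ stripSet f n ↔ ∀ j : Fin n, f ((j : ℕ) + 1) ≤ r j ∧ r j ≤ f (j : ℕ) := by
  simp [stripSet, Fintype.mem_piFinset]

lemma hsh_lt {r : Fin n → ℕ} {i : ℕ} (h : i < n) : hsh n r i = r ⟨i, h⟩ := dif_pos h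

lemma hsh_ge {r : Fin n → ℕ} {i : ℕ} (h : ¬ i < n) : hsh n r i = 0 := dif_neg h

lemma hsh_le_f (hr : r ∈ stripSet f n) : ∀ i, hsh n r i ≤ f i := by
  intro i
  by_cases h : i < n
  · rw [hsh_lt h]; exact ((mem_stripSet.1 hr) ⟨i, h⟩).2
  · rw [hsh_ge h]; exact Nat.zero_le _

lemma f_succ_le_hsh (hr : r ∈ stripSet f n) {i : ℕ} (h : i < n) : f (i + 1) ≤ hsh n r i := by
  rw [hsh_lt h]; exact ((mem_stripSet.1 hr) ⟨i, h⟩).1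

lemma hsh_antitone (hf : Antitone f) (hr : r ∈ stripSet f n) : Antitone (hsh n r) := by
  apply antitone_nat_of_succ_le
  intro i
  by_cases h : i + 1 < n
  · calc hsh n r (i + 1) ≤ f (i + 1) := hsh_le_f hr _
    _ ≤ hsh n r i := f_succ_le_hsh hr (by omega)
  · rw [hsh_ge h]; exact Nat.zero_le _

lemma hsh_vanish (hr : r ∈ stripSet f n) (hN : ∀ i, N ≤ i → f i = 0) :
    ∀ i, N ≤ i → hsh n r i = 0 := fun i hi =>
  Nat.le_zero.1 ((hN i hi) ▸ hsh_le_f hr i)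

/-! ### downward-closed sets -/

lemma dc_range {S : Finset ℕ} (h : ∀ a b, a ≤ b → b ∈ S → a ∈ S) :
    S = Finset.range S.card := by
  rcases S.eq_empty_or_nonempty with rfl | hS
  · simp
  · have hmax := S.max'_mem hS
    have hre : S = Finset.range (S.max' hS + 1) := by
      ext a
      simp only [Finset.mem_range]
      constructor
      · intro ha; have := S.le_max' a ha; omega
      · intro ha; exact h a _ (by omega) hmax
    have hc : S.card = S.max' hS + 1 := by
      conv_lhs => rw [hre]
      rw [Finset.card_range]
    rw [hc]; exact hre

/-! ### branching data -/

noncomputable def rT (f : ℕ → ℕ) (n : ℕ) (T : (ℕ × ℕ) → ℕ) : Fin n → ℕ := fun j =>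
  ((Finset.range (f (j : ℕ))).filter fun c => T ((j : ℕ), c) < n).card

def trunc (n : ℕ) (T : (ℕ × ℕ) → ℕ) : (ℕ × ℕ) → ℕ := fun c => if T c < n then T c else 0

def glue (f : ℕ → ℕ) (n : ℕ) (r : Fin n → ℕ) (T' : (ℕ × ℕ) → ℕ) : (ℕ × ℕ) → ℕ :=
  fun c => if c.2 < hsh n r c.1 then T' c else if c.2 < f c.1 then n else 0

section branch

variable (hf : Antitone f) (hN : ∀ i, N ≤ i → f i = 0) (hn : ∀ i, n + 1 ≤ i → f i = 0)
variable (hT : IsSSYT f (fun _ => 0) T) (hlt : ∀ c ∈ cells f N, T c < n + 1)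

include hf hT in
lemma prefix_iff (j : Fin n) {c : ℕ} (hc : c < f (j : ℕ)) :
    (T ((j : ℕ), c) < n ↔ c < rT f n T j) := by
  set S := (Finset.range (f (j : ℕ))).filter fun c => T ((j : ℕ), c) < n with hS
  have hdc : ∀ a b, a ≤ b → b ∈ S → a ∈ S := by
    intro a b hab hb
    obtain ⟨hb1, hb2⟩ := Finset.mem_filter.1 hb
    rw [Finset.mem_range] at hb1
    refine Finset.mem_filter.2 ⟨Finset.mem_range.2 (by omega), ?_⟩
    exact lt_of_le_of_lt (ssyt_row_mono hT hab hb1) hb2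
  have hrange := dc_range hdc
  constructor
  · intro h
    have : c ∈ S := Finset.mem_filter.2 ⟨Finset.mem_range.2 hc, h⟩
    rw [hrange] at this
    exact Finset.mem_range.1 this
  · intro h
    have : c ∈ S := by rw [hrange]; exact Finset.mem_range.2 h
    exact (Finset.mem_filter.1 this).2

include hf hN hn hT hlt in
lemma rT_mem : rT f n T ∈ stripSet f n := by
  rw [mem_stripSet]
  intro j
  constructor
  · -- f (j+1) ≤ rT j
    have hsub : Finset.range (f ((j : ℕ) + 1)) ⊆
        (Finset.range (f (j : ℕ))).filter fun c => T ((j : ℕ), c) < n := by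
      intro c hc
      rw [Finset.mem_range] at hc
      have hcj : c < f (j : ℕ) := lt_of_lt_of_le hc (hf (Nat.le_succ _))
      refine Finset.mem_filter.2 ⟨Finset.mem_range.2 hcj, ?_⟩
      have hcol := ssyt_col hT hcj hc
      have : T ((j : ℕ) + 1, c) < n + 1 :=
        hlt _ ((mem_cells hf hN).2 (by exact hc))
      omega
    have := Finset.card_le_card hsub
    rwa [Finset.card_range] at this
  · -- rT j ≤ f j
    have := Finset.card_filter_le (Finset.range (f (j : ℕ))) fun c => T ((j : ℕ), c) < n
    rwa [Finset.card_range] at this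

include hf hN hn hT hlt in
lemma strip_entry {i j : ℕ} (h1 : hsh n (rT f n T) i ≤ j) (h2 : j < f i) : T (i, j) = n := by
  have hin : T (i, j) < n + 1 := hlt _ ((mem_cells hf hN).2 h2)
  by_cases hi : i < n
  · rw [hsh_lt hi] at h1
    have := (prefix_iff hf hT ⟨i, hi⟩ h2).not
    push_neg at this
    have hge : ¬ T (i, j) < n := by
      intro hTn
      have := (prefix_iff hf hT ⟨i, hi⟩ h2).1 hTn
      omega
    omega
  · have hle : i ≤ n := by
      by_contra hc
      rw [hn i (by omega)] at h2; omega
    have : i = n := by omega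
    subst this
    have := ssyt_entry_ge_row hf hT i j h2
    omega

include hf hN hn hT hlt in
lemma trunc_mem : trunc n T ∈ Tabs (hsh n (rT f n T)) N n := by
  have hrmem := rT_mem hf hN hn hT hlt
  have hanti := hsh_antitone hf hrmem
  have hvan := hsh_vanish hrmem hN
  have hlt' : ∀ i j, j < hsh n (rT f n T) i → T (i, j) < n := by
    intro i j hj
    have hi : i < n := by
      by_contra hc
      rw [hsh_ge hc] at hj; omega
    rw [hsh_lt hi] at hj
    have hjf : j < f i := lt_of_lt_of_le hj (by
      have := (mem_stripSet.1 hrmem ⟨i, hi⟩).2; exact this)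
    exact (prefix_iff hf hT ⟨i, hi⟩ hjf).2 hj
  rw [mem_Tabs hanti hvan]
  constructor
  · refine ⟨?_, ?_, ?_⟩
    · intro i j _ hj
      have h1 := hlt' i j (by omega)
      have h2 := hlt' i (j + 1) hj
      have hjf : j + 1 < f i := lt_of_lt_of_le hj (hsh_le_f hrmem i)
      have := ssyt_row hT hjf
      simp only [trunc, h1, h2, if_pos]
      exact this
    · intro i j _ hj1 _ hj2
      have h1 := hlt' i j hj1
      have h2 := hlt' (i + 1) j hj2
      have hjf1 : j < f i := lt_of_lt_of_le hj1 (hsh_le_f hrmem i)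
      have hjf2 : j < f (i + 1) := lt_of_lt_of_le hj2 (hsh_le_f hrmem (i + 1))
      have := ssyt_col hT hjf1 hjf2
      simp only [trunc, h1, h2, if_pos]
      exact this
    · intro i j hcond
      have hj : ¬ j < hsh n (rT f n T) i := fun hc => hcond ⟨Nat.zero_le _, hc⟩
      simp only [trunc]
      by_cases hjf : j < f i
      · have := strip_entry hf hN hn hT hlt (by omega) hjf
        simp [this]
      · have := ssyt_zero hT hjf
        simp [this]
  · intro c hc
    have hj : c.2 < hsh n (rT f n T) c.1 := (mem_cells hanti hvan).1 hc
    have := hlt' c.1 c.2 hj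
    simpa [trunc, this] using this

end branch

end TwoLeg

namespace TwoLeg
open Finset

variable {f : ℕ → ℕ} {N n : ℕ} {T : ℕ × ℕ → ℕ} {r : Fin n → ℕ} {T' : ℕ × ℕ → ℕ}

section branch2

variable (hf : Antitone f) (hN : ∀ i, N ≤ i → f i = 0) (hn : ∀ i, n + 1 ≤ i → f i = 0)
variable (hT : IsSSYT f (fun _ => 0) T) (hlt : ∀ c ∈ cells f N, T c < n + 1)

include hf hN hn hT hlt in
lemma weight_split (x : ℕ → ℂ) :
    ∏ c ∈ cells f N, x (T c) =
      x n ^ (f n + ∑ j : Fin n, (f (j : ℕ) - rT f n T j)) *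
        ∏ c ∈ cells (hsh n (rT f n T)) N, x (trunc n T c) := by
  have hrmem := rT_mem hf hN hn hT hlt
  have hanti := hsh_antitone hf hrmem
  have hvan := hsh_vanish hrmem hN
  set r := rT f n T with hrdef
  have hsub : cells (hsh n r) N ⊆ cells f N := by
    intro c hc
    exact (mem_cells hf hN).2 (lt_of_lt_of_le ((mem_cells hanti hvan).1 hc) (hsh_le_f hrmem c.1))
  rw [← Finset.prod_sdiff hsub]
  have hdiffval : ∀ c ∈ cells f N \ cells (hsh n r) N, x (T c) = x n := by
    intro c hc
    obtain ⟨h1, h2⟩ := Finset.mem_sdiff.1 hc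
    have hcf := (mem_cells hf hN).1 h1
    have hch : ¬ c.2 < hsh n r c.1 := fun hcc => h2 ((mem_cells hanti hvan).2 hcc)
    rw [strip_entry hf hN hn hT hlt (by rw [← hrdef]; omega) hcf]
  have hsubval : ∀ c ∈ cells (hsh n r) N, x (T c) = x (trunc n T c) := by
    intro c hc
    have hj : c.2 < hsh n r c.1 := (mem_cells hanti hvan).1 hc
    have hi : c.1 < n := by
      by_contra hcon; rw [hsh_ge hcon] at hj; omega
    have hjf : c.2 < f c.1 := lt_of_lt_of_le hj (hsh_le_f hrmem c.1)
    rw [hsh_lt hi] at hj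
    have hTc : T c < n := (prefix_iff hf hT ⟨c.1, hi⟩ hjf).2 hj
    simp [trunc, hTc]
  rw [Finset.prod_congr rfl hdiffval, Finset.prod_congr rfl hsubval, Finset.prod_const]
  have hcard : (cells f N \ cells (hsh n r) N).card
      = f n + ∑ j : Fin n, (f (j : ℕ) - r j) := by
    have hset : cells f N \ cells (hsh n r) N =
        (Finset.range (n + 1)).biUnion fun i => {i} ×ˢ Finset.Ico (hsh n r i) (f i) := by
      ext c
      simp only [Finset.mem_sdiff, mem_cells hf hN, mem_cells hanti hvan, Finset.mem_biUnion,
        Finset.mem_range, Finset.mem_product, Finset.mem_singleton, Finset.mem_Ico]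
      constructor
      · rintro ⟨h1, h2⟩
        refine ⟨c.1, ?_, rfl, by omega, h1⟩
        by_contra hcon
        rw [hn c.1 (by omega)] at h1; omega
      · rintro ⟨i, hi, heq, hge, hlt2⟩
        rw [heq]
        exact ⟨hlt2, by omega⟩
    rw [hset, Finset.card_biUnion]
    · have hc1 : ∀ i ∈ Finset.range (n + 1),
          ({i} ×ˢ Finset.Ico (hsh n r i) (f i)).card = f i - hsh n r i := by
        intro i _
        rw [Finset.card_product, Finset.card_singleton, Nat.card_Ico, one_mul]
      rw [Finset.sum_congr rfl hc1, Finset.sum_range_succ]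
      rw [hsh_ge (lt_irrefl n), Nat.sub_zero, Finset.sum_range fun i => f i - hsh n r i]
      have h3 : ∀ j : Fin n, f (j : ℕ) - hsh n r (j : ℕ) = f (j : ℕ) - r j := by
        intro j; rw [hsh_lt j.isLt]
      rw [Finset.sum_congr rfl fun j _ => h3 j]
      omega
    · intro a _ b _ hab
      rw [Function.onFun_apply, Finset.disjoint_left]
      intro c hc1 hc2
      have e1 : c.1 = a := (Finset.mem_singleton.1 (Finset.mem_product.1 hc1).1)
      have e2 : c.1 = b := (Finset.mem_singleton.1 (Finset.mem_product.1 hc2).1)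
      exact hab (e1 ▸ e2)
  rw [hcard]

end branch2

section branch3

variable (hf : Antitone f) (hN : ∀ i, N ≤ i → f i = 0) (hn : ∀ i, n + 1 ≤ i → f i = 0)
variable (hr : r ∈ stripSet f n) (hT' : T' ∈ Tabs (hsh n r) N n)

include hf hN hn hr hT' in
lemma glue_mem : glue f n r T' ∈ Tabs f N (n + 1) := by
  have hanti := hsh_antitone hf hr
  have hvan := hsh_vanish hr hN
  obtain ⟨hT'1, hT'2⟩ := (mem_Tabs hanti hvan).1 hT'
  have hT'lt : ∀ c : ℕ × ℕ, c.2 < hsh n r c.1 → T' c < n := by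
    intro c hc
    exact hT'2 c ((mem_cells hanti hvan).2 hc)
  rw [mem_Tabs hf hN]
  constructor
  · refine ⟨?_, ?_, ?_⟩
    · -- rows
      intro i j _ hj
      by_cases h1 : j + 1 < hsh n r i
      · have h0 : j < hsh n r i := by omega
        simp only [glue, h0, h1, if_pos]
        exact ssyt_row hT'1 h1
      · by_cases h0 : j < hsh n r i
        · have hv1 : glue f n r T' (i, j) = T' (i, j) := by simp [glue, h0]
          have hv2 : glue f n r T' (i, j + 1) = n := by simp [glue, h1, hj]
          rw [hv1, hv2]
          exact le_of_lt (hT'lt (i, j) h0)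
        · have hv1 : glue f n r T' (i, j) = n := by simp [glue, h0]; intro hc; omega
          have hv2 : glue f n r T' (i, j + 1) = n := by simp [glue, h1, hj]
          rw [hv1, hv2]
    · -- cols
      intro i j _ hj1 _ hj2
      have hin : i < n := by
        by_contra hcon
        rw [hn (i + 1) (by omega)] at hj2; omega
      by_cases h2 : j < hsh n r (i + 1)
      · have h1 : j < hsh n r i := lt_of_lt_of_le h2 (hanti (Nat.le_succ i))
        simp only [glue, h1, h2, if_pos]
        exact ssyt_col hT'1 h1 h2
      · by_cases h1 : j < hsh n r i
        · have hv1 : glue f n r T' (i, j) = T' (i, j) := by simp [glue, h1]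
          have hv2 : glue f n r T' (i + 1, j) = n := by simp [glue, h2, hj2]
          rw [hv1, hv2]
          exact hT'lt (i, j) h1
        · exfalso
          have := f_succ_le_hsh hr hin
          omega
    · -- zero outside
      intro i j hcond
      have hjf : ¬ j < f i := fun hc => hcond ⟨Nat.zero_le _, hc⟩
      have hjh : ¬ j < hsh n r i := fun hc => hjf (lt_of_lt_of_le hc (hsh_le_f hr i))
      simp [glue, hjh, hjf]
  · intro c hc
    by_cases h1 : c.2 < hsh n r c.1
    · have := hT'lt c h1
      simp only [glue, h1, if_pos]
      omega
    · have hcf := (mem_cells hf hN).1 hc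
      simp [glue, h1, hcf]

include hf hN hn hr hT' in
lemma rT_glue : rT f n (glue f n r T') = r := by
  have hanti := hsh_antitone hf hr
  have hvan := hsh_vanish hr hN
  obtain ⟨hT'1, hT'2⟩ := (mem_Tabs hanti hvan).1 hT'
  have hT'lt : ∀ c : ℕ × ℕ, c.2 < hsh n r c.1 → T' c < n := by
    intro c hc
    exact hT'2 c ((mem_cells hanti hvan).2 hc)
  funext j
  show ((Finset.range (f (j : ℕ))).filter fun c => glue f n r T' ((j : ℕ), c) < n).card = r j
  have hrle : r j ≤ f (j : ℕ) := (mem_stripSet.1 hr j).2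
  have hset : ((Finset.range (f (j : ℕ))).filter fun c => glue f n r T' ((j : ℕ), c) < n)
      = Finset.range (r j) := by
    ext c
    simp only [Finset.mem_filter, Finset.mem_range]
    constructor
    · rintro ⟨hc1, hc2⟩
      by_contra hcon
      push_neg at hcon
      have hch : ¬ c < hsh n r (j : ℕ) := by
        rw [hsh_lt j.isLt]; show ¬ c < r j; omega
      have : glue f n r T' ((j : ℕ), c) = n := by simp [glue, hch, hc1]
      omega
    · intro hcr
      have hch : c < hsh n r (j : ℕ) := by
        rw [hsh_lt j.isLt]; show c < r j; omega
      have : glue f n r T' ((j : ℕ), c) = T' ((j : ℕ), c) := by simp [glue, hch]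
      rw [this]
      exact ⟨by omega, hT'lt ((j : ℕ), c) hch⟩
  rw [hset, Finset.card_range]

include hf hN hn hr hT' in
lemma trunc_glue : trunc n (glue f n r T') = T' := by
  have hanti := hsh_antitone hf hr
  have hvan := hsh_vanish hr hN
  obtain ⟨hT'1, hT'2⟩ := (mem_Tabs hanti hvan).1 hT'
  have hT'lt : ∀ c : ℕ × ℕ, c.2 < hsh n r c.1 → T' c < n := by
    intro c hc
    exact hT'2 c ((mem_cells hanti hvan).2 hc)
  funext c
  by_cases h1 : c.2 < hsh n r c.1
  · have hv : glue f n r T' c = T' c := by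
      show (if c.2 < hsh n r c.1 then T' c else _) = T' c
      simp [h1]
    simp [trunc, hv, hT'lt c h1]
  · have hz : T' c = 0 := by
      have := hT'1.2.2 c.1 c.2 (fun hc => h1 hc.2)
      exact this
    by_cases h2 : c.2 < f c.1
    · have hv : glue f n r T' c = n := by
        show (if c.2 < hsh n r c.1 then T' c else if c.2 < f c.1 then n else 0) = n
        simp [h1, h2]
      simp [trunc, hv, hz]
    · have hv : glue f n r T' c = 0 := by
        show (if c.2 < hsh n r c.1 then T' c else if c.2 < f c.1 then n else 0) = 0
        simp [h1, h2]
      simp [trunc, hv, hz]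

end branch3

section branch4

variable (hf : Antitone f) (hN : ∀ i, N ≤ i → f i = 0) (hn : ∀ i, n + 1 ≤ i → f i = 0)
variable (hT : IsSSYT f (fun _ => 0) T) (hlt : ∀ c ∈ cells f N, T c < n + 1)

include hf hN hn hT hlt in
lemma glue_rT_trunc : glue f n (rT f n T) (trunc n T) = T := by
  have hrmem := rT_mem hf hN hn hT hlt
  funext c
  by_cases h1 : c.2 < hsh n (rT f n T) c.1
  · have hi : c.1 < n := by
      by_contra hcon; rw [hsh_ge hcon] at h1; omega
    have hjf : c.2 < f c.1 := lt_of_lt_of_le h1 (hsh_le_f hrmem c.1)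
    rw [hsh_lt hi] at h1
    have hTc : T c < n := (prefix_iff hf hT ⟨c.1, hi⟩ hjf).2 h1
    show (if c.2 < hsh n (rT f n T) c.1 then trunc n T c else _) = T c
    rw [if_pos (by rw [hsh_lt hi]; exact h1)]
    simp [trunc, hTc]
  · by_cases h2 : c.2 < f c.1
    · have := strip_entry hf hN hn hT hlt (by omega) h2
      show (if c.2 < hsh n (rT f n T) c.1 then trunc n T c else if c.2 < f c.1 then n else 0) = T c
      rw [if_neg h1, if_pos h2, this]
    · have := ssyt_zero hT h2
      show (if c.2 < hsh n (rT f n T) c.1 then trunc n T c else if c.2 < f c.1 then n else 0) = T c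
      rw [if_neg h1, if_neg h2, this]

include hf hN hn in
lemma schurP_branch (x : ℕ → ℂ) :
    schurP f N (n + 1) x =
      ∑ r ∈ stripSet f n,
        x n ^ (f n + ∑ j : Fin n, (f (j : ℕ) - r j)) * schurP (hsh n r) N n x := by
  have hexp : ∀ r ∈ stripSet f n,
      x n ^ (f n + ∑ j : Fin n, (f (j : ℕ) - r j)) * schurP (hsh n r) N n x
        = ∑ T' ∈ Tabs (hsh n r) N n,
            x n ^ (f n + ∑ j : Fin n, (f (j : ℕ) - r j)) * ∏ c ∈ cells (hsh n r) N, x (T' c) := by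
    intro r _
    rw [schurP, Finset.mul_sum]
  rw [Finset.sum_congr rfl hexp, Finset.sum_sigma' (stripSet f n)
    (fun r => Tabs (hsh n r) N n)
    (fun r T' => x n ^ (f n + ∑ j : Fin n, (f (j : ℕ) - r j)) * ∏ c ∈ cells (hsh n r) N, x (T' c)),
    schurP]
  refine Finset.sum_nbij' (fun T => ⟨rT f n T, trunc n T⟩) (fun p => glue f n p.1 p.2)
    ?_ ?_ ?_ ?_ ?_
  · intro T hTmem
    obtain ⟨h1, h2⟩ := (mem_Tabs hf hN).1 hTmem
    exact Finset.mem_sigma.2 ⟨rT_mem hf hN hn h1 h2, trunc_mem hf hN hn h1 h2⟩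
  · rintro ⟨r, T'⟩ hp
    obtain ⟨hp1, hp2⟩ := Finset.mem_sigma.1 hp
    exact glue_mem hf hN hn hp1 hp2
  · intro T hTmem
    obtain ⟨h1, h2⟩ := (mem_Tabs hf hN).1 hTmem
    exact glue_rT_trunc hf hN hn h1 h2
  · rintro ⟨r, T'⟩ hp
    obtain ⟨hp1, hp2⟩ := Finset.mem_sigma.1 hp
    have e1 := rT_glue hf hN hn hp1 hp2
    have e2 := trunc_glue hf hN hn hp1 hp2
    show (⟨rT f n (glue f n r T'), trunc n (glue f n r T')⟩ : Σ _ : Fin n → ℕ, (ℕ × ℕ) → ℕ)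
      = ⟨r, T'⟩
    rw [e1, e2]
  · intro T hTmem
    obtain ⟨h1, h2⟩ := (mem_Tabs hf hN).1 hTmem
    exact weight_split hf hN hn h1 h2 x

end branch4

end TwoLeg

namespace TwoLeg
open Finset Matrix

variable {f : ℕ → ℕ} {N n : ℕ}

lemma telescope (xx t : ℂ) (e : ℕ) : ∀ a b : ℕ, a ≤ b →
    (xx - t) * ∑ m ∈ Finset.Icc a b, t ^ (b - m) * xx ^ (m + e)
      = xx ^ (b + 1 + e) - t ^ (b + 1 - a) * xx ^ (a + e) := by
  intro a
  refine Nat.le_induction ?_ ?_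
  · rw [Finset.Icc_self, Finset.sum_singleton, Nat.sub_self, pow_zero, one_mul]
    have h1 : a + 1 + e = (a + e) + 1 := by omega
    have h2 : a + 1 - a = 1 := by omega
    rw [h1, h2, pow_succ, pow_one]
    ring
  · intro b hab IH
    rw [Finset.sum_Icc_succ_top (by omega : a ≤ b + 1)]
    have hterm : t ^ (b + 1 - (b + 1)) * xx ^ ((b + 1) + e) = xx ^ (b + 1 + e) := by
      rw [Nat.sub_self, pow_zero, one_mul]
    rw [hterm]
    have hsum : ∑ m ∈ Finset.Icc a b, t ^ (b + 1 - m) * xx ^ (m + e)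
        = t * ∑ m ∈ Finset.Icc a b, t ^ (b - m) * xx ^ (m + e) := by
      rw [Finset.mul_sum]
      refine Finset.sum_congr rfl ?_
      intro m hm
      have hmb : m ≤ b := (Finset.mem_Icc.1 hm).2
      have he : b + 1 - m = (b - m) + 1 := by omega
      rw [he, pow_succ]
      ring
    rw [hsum]
    have e1 : b + 1 + 1 + e = (b + 1 + e) + 1 := by omega
    have e2 : b + 1 + 1 - a = (b + 1 - a) + 1 := by omega
    rw [e1, e2, pow_succ, pow_succ]
    linear_combination t * IH

lemma alt_branch (hf : Antitone f) (x : ℕ → ℂ) :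
    alt f (n + 1) x =
      x n ^ f n * (∏ i : Fin n, (x (i : ℕ) - x n)) *
        ∑ r ∈ stripSet f n,
          (∏ j : Fin n, x n ^ (f (j : ℕ) - r j)) * alt (hsh n r) n x := by
  set t := x n with htdef
  set M : Matrix (Fin (n + 1)) (Fin (n + 1)) ℂ :=
    Matrix.of fun i j : Fin (n + 1) => x (i : ℕ) ^ (f (j : ℕ) + (n - (j : ℕ))) with hM
  have hMalt : alt f (n + 1) x = M.det := by
    unfold alt
    congr 1
  set U : Matrix (Fin (n + 1)) (Fin (n + 1)) ℂ :=
    Matrix.of fun a b : Fin (n + 1) =>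
      (if a = b then (1 : ℂ) else 0) +
        (if (a : ℕ) = (b : ℕ) + 1 then -(t ^ (f (b : ℕ) - f ((b : ℕ) + 1) + 1)) else 0) with hU
  have hUtri : U.BlockTriangular (OrderDual.toDual) := by
    intro i j hij
    have hij' : i < j := hij
    have h1 : ¬ i = j := ne_of_lt hij'
    have h2 : ¬ (i : ℕ) = (j : ℕ) + 1 := by
      have : (i : ℕ) < (j : ℕ) := hij'
      omega
    simp [hU, h1, h2]
  have hUdet : U.det = 1 := by
    rw [Matrix.det_of_lowerTriangular U hUtri]
    apply Finset.prod_eq_one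
    intro a _
    simp [hU]
  set M' : Matrix (Fin (n + 1)) (Fin (n + 1)) ℂ :=
    Matrix.of fun i b : Fin (n + 1) =>
      x (i : ℕ) ^ (f (b : ℕ) + (n - (b : ℕ))) +
        (if (b : ℕ) < n then
          -(t ^ (f (b : ℕ) - f ((b : ℕ) + 1) + 1) *
            x (i : ℕ) ^ (f ((b : ℕ) + 1) + (n - ((b : ℕ) + 1)))) else 0) with hM'
  have hMU : M * U = M' := by
    ext i b
    rw [Matrix.mul_apply]
    have hsplit : ∀ a : Fin (n + 1), M i a * U a b
        = (if a = b then M i b else 0) +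
          (if (a : ℕ) = (b : ℕ) + 1 then
            M i a * -(t ^ (f (b : ℕ) - f ((b : ℕ) + 1) + 1)) else 0) := by
      intro a
      simp only [hU, Matrix.of_apply]
      rw [mul_add]
      congr 1
      · by_cases h : a = b
        · subst h; simp
        · simp [h]
      · by_cases h : (a : ℕ) = (b : ℕ) + 1
        · simp [h]
        · simp [h]
    rw [Finset.sum_congr rfl fun a _ => hsplit a, Finset.sum_add_distrib]
    have hfirst : (∑ a : Fin (n + 1), if a = b then M i b else 0) = M i b := by
      rw [Finset.sum_ite_eq' Finset.univ b fun _ => M i b]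
      simp
    rw [hfirst]
    by_cases hb : (b : ℕ) < n
    · set a0 : Fin (n + 1) := ⟨(b : ℕ) + 1, by omega⟩ with ha0
      have hsecond : (∑ a : Fin (n + 1), if (a : ℕ) = (b : ℕ) + 1 then
          M i a * -(t ^ (f (b : ℕ) - f ((b : ℕ) + 1) + 1)) else 0)
          = M i a0 * -(t ^ (f (b : ℕ) - f ((b : ℕ) + 1) + 1)) := by
        have : ∀ a : Fin (n + 1), ((a : ℕ) = (b : ℕ) + 1) = (a = a0) := by
          intro a
          simp only [ha0, Fin.ext_iff]
        simp_rw [this]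
        rw [Finset.sum_ite_eq' Finset.univ a0 fun a => M i a * _]
        simp
      rw [hsecond]
      simp only [hM', Matrix.of_apply, hM]
      rw [if_pos hb]
      ring
    · have hsecond : (∑ a : Fin (n + 1), if (a : ℕ) = (b : ℕ) + 1 then
          M i a * -(t ^ (f (b : ℕ) - f ((b : ℕ) + 1) + 1)) else 0) = 0 := by
        apply Finset.sum_eq_zero
        intro a _
        have : ¬ (a : ℕ) = (b : ℕ) + 1 := by
          have h1 : (a : ℕ) < n + 1 := a.isLt
          have h2 : (b : ℕ) < n + 1 := b.isLt
          omega
        simp [this]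
      rw [hsecond]
      simp only [hM', Matrix.of_apply, hM]
      rw [if_neg hb]
  have hdetM : M.det = M'.det := by
    rw [← hMU, Matrix.det_mul, hUdet, mul_one]
  -- expand along the last row
  have hlastrow : ∀ b : Fin (n + 1), (b : ℕ) < n → M' (Fin.last n) b = 0 := by
    intro b hb
    have hfb : f ((b : ℕ) + 1) ≤ f (b : ℕ) := hf (Nat.le_succ _)
    simp only [hM', Matrix.of_apply, if_pos hb, Fin.val_last]
    rw [← pow_add]
    have : f (b : ℕ) - f ((b : ℕ) + 1) + 1 + (f ((b : ℕ) + 1) + (n - ((b : ℕ) + 1)))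
        = f (b : ℕ) + (n - (b : ℕ)) := by omega
    rw [this]
    ring
  set B : Matrix (Fin n) (Fin n) ℂ :=
    Matrix.of fun i j : Fin n =>
      x (i : ℕ) ^ (f (j : ℕ) + (n - (j : ℕ))) +
        -(t ^ (f (j : ℕ) - f ((j : ℕ) + 1) + 1) *
          x (i : ℕ) ^ (f ((j : ℕ) + 1) + (n - ((j : ℕ) + 1)))) with hB
  have hminor : M'.submatrix (Fin.last n).succAbove (Fin.last n).succAbove = B := by
    ext i j
    simp only [Matrix.submatrix_apply, Fin.succAbove_last, hM', hB, Matrix.of_apply,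
      Fin.coe_castSucc]
    rw [if_pos j.isLt]
  have hdetM' : M'.det = t ^ f n * B.det := by
    rw [Matrix.det_succ_row M' (Fin.last n)]
    rw [Finset.sum_eq_single (Fin.last n)]
    · have hent : M' (Fin.last n) (Fin.last n) = t ^ f n := by
        simp only [hM', Matrix.of_apply, Fin.val_last]
        rw [if_neg (lt_irrefl n), Nat.sub_self, Nat.add_zero, add_zero, htdef]
      rw [hent, hminor]
      have hsign : ((-1 : ℂ)) ^ ((Fin.last n : ℕ) + (Fin.last n : ℕ)) = 1 := by
        rw [Fin.val_last]
        exact Even.neg_one_pow ⟨n, by omega⟩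
      rw [hsign, one_mul]
    · intro b _ hbne
      have hb : (b : ℕ) < n := by
        have := b.isLt
        have : ¬ (b : ℕ) = n := fun hc => hbne (Fin.ext (by rw [hc, Fin.val_last]))
        omega
      rw [hlastrow b hb]
      ring
    · intro h
      exact absurd (Finset.mem_univ _) h
  -- B = (x i - t) * column sums
  set A : Matrix (Fin n) (Fin n) ℂ := Matrix.of fun i j : Fin n =>
      ∑ m ∈ Finset.Icc (f ((j : ℕ) + 1)) (f (j : ℕ)),
        t ^ (f (j : ℕ) - m) * x (i : ℕ) ^ (m + (n - 1 - (j : ℕ))) with hA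
  have hBfact : B = Matrix.of fun i j : Fin n => (x (i : ℕ) - t) * A i j := by
    ext i j
    simp only [hB, hA, Matrix.of_apply]
    have hmono : f ((j : ℕ) + 1) ≤ f (j : ℕ) := hf (by omega)
    rw [telescope (x (i : ℕ)) t (n - 1 - (j : ℕ)) (f ((j : ℕ) + 1)) (f (j : ℕ)) hmono]
    have hj := j.isLt
    have e1 : f (j : ℕ) + 1 + (n - 1 - (j : ℕ)) = f (j : ℕ) + (n - (j : ℕ)) := by omega
    have e2 : f (j : ℕ) + 1 - f ((j : ℕ) + 1) = f (j : ℕ) - f ((j : ℕ) + 1) + 1 := by omega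
    have e3 : f ((j : ℕ) + 1) + (n - 1 - (j : ℕ)) = f ((j : ℕ) + 1) + (n - ((j : ℕ) + 1)) := by
      omega
    rw [e1, e2, e3]
    ring
  have hdetB : B.det = (∏ i : Fin n, (x (i : ℕ) - t)) *
      ∑ r ∈ stripSet f n, (∏ j : Fin n, t ^ (f (j : ℕ) - r j)) * alt (hsh n r) n x := by
    rw [hBfact, Matrix.det_mul_column (fun i : Fin n => x (i : ℕ) - t) A]
    congr 1
    have htrans : A.det = (A.transpose).det := (Matrix.det_transpose A).symm
    rw [htrans]
    have hrows : A.transpose = fun j : Fin n =>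
        ∑ m ∈ Finset.Icc (f ((j : ℕ) + 1)) (f (j : ℕ)),
          (fun i : Fin n => t ^ (f (j : ℕ) - m) * x (i : ℕ) ^ (m + (n - 1 - (j : ℕ)))) := by
      funext j i
      rw [Finset.sum_apply]
      rfl
    have hmap := (Matrix.detRowAlternating (R := ℂ) (n := Fin n)).toMultilinearMap.map_sum_finset
      (fun j m => fun i : Fin n => t ^ (f (j : ℕ) - m) * x (i : ℕ) ^ (m + (n - 1 - (j : ℕ))))
      (fun j : Fin n => Finset.Icc (f ((j : ℕ) + 1)) (f (j : ℕ)))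
    simp only [AlternatingMap.coe_multilinearMap] at hmap
    show Matrix.detRowAlternating A.transpose = _
    rw [hrows, hmap]
    refine Finset.sum_congr rfl ?_
    intro r hr
    have hdet1 : (Matrix.detRowAlternating
        (fun j => fun i : Fin n => t ^ (f (j : ℕ) - r j) * x (i : ℕ) ^ (r j + (n - 1 - (j : ℕ)))))
        = (∏ j : Fin n, t ^ (f (j : ℕ) - r j)) *
          Matrix.det (Matrix.of fun j i : Fin n => x (i : ℕ) ^ (r j + (n - 1 - (j : ℕ)))) := by
      exact Matrix.det_mul_column (fun j : Fin n => t ^ (f (j : ℕ) - r j))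
        (Matrix.of fun j i : Fin n => x (i : ℕ) ^ (r j + (n - 1 - (j : ℕ))))
    rw [hdet1]
    congr 1
    rw [← Matrix.det_transpose]
    unfold alt
    congr 1
    ext i j
    simp only [Matrix.transpose_apply, Matrix.of_apply]
    rw [hsh_lt j.isLt]
  rw [hMalt, hdetM, hdetM', hdetB]
  ring

end TwoLeg

namespace TwoLeg
open Finset Matrix

variable {f : ℕ → ℕ} {N n : ℕ}

lemma hsh_zero : hsh n (fun _ : Fin n => 0) = fun _ => 0 := by
  funext i
  by_cases h : i < n <;> simp [hsh, h]

lemma stripSet_zero : stripSet (fun _ => 0) n = {fun _ : Fin n => 0} := by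
  ext r
  simp [stripSet, Fintype.mem_piFinset, funext_iff]

lemma cells_zero : cells (fun _ => 0) N = ∅ := by
  ext c; simp [cells]

lemma Tabs_zero_shape : Tabs (fun _ => 0) N n = {fun _ => 0} := by
  ext T
  rw [mem_Tabs antitone_const (fun _ _ => rfl)]
  constructor
  · rintro ⟨h1, _⟩
    have hz : ∀ c : ℕ × ℕ, T c = 0 := fun c => h1.2.2 c.1 c.2 (by simp)
    rw [Finset.mem_singleton]
    funext c; exact hz c
  · intro h
    rw [Finset.mem_singleton] at h
    subst h
    refine ⟨⟨fun i j _ h => absurd h (by omega), fun i j _ h _ _ => absurd h (by omega),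
      fun i j _ => rfl⟩, ?_⟩
    rw [cells_zero]
    intro c hc
    exact absurd hc (Finset.notMem_empty c)

lemma schurP_zero_shape (x : ℕ → ℂ) : schurP (fun _ => 0) N n x = 1 := by
  rw [schurP, Tabs_zero_shape, Finset.sum_singleton, cells_zero, Finset.prod_empty]

theorem alt_eq (x : ℕ → ℂ) (N : ℕ) :
    ∀ n (f : ℕ → ℕ), Antitone f → (∀ i, n ≤ i → f i = 0) → (∀ i, N ≤ i → f i = 0) →
      alt f n x = schurP f N n x * alt (fun _ => 0) n x := by
  intro n
  induction n with
  | zero =>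
      intro f hf hn hN
      have hf0 : f = fun _ => 0 := funext fun i => hn i (Nat.zero_le i)
      subst hf0
      rw [schurP_zero_shape, one_mul]
  | succ n ih =>
      intro f hf hn hN
      rw [alt_branch hf x, schurP_branch hf hN hn x]
      have hzero : alt (fun _ => 0) (n + 1) x
          = (∏ i : Fin n, (x (i : ℕ) - x n)) * alt (fun _ => 0) n x := by
        rw [alt_branch antitone_const x, stripSet_zero, Finset.sum_singleton, hsh_zero]
        simp
      have hterm : ∀ r ∈ stripSet f n,
          (∏ j : Fin n, x n ^ (f (j : ℕ) - r j)) * alt (hsh n r) n x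
            = (∏ j : Fin n, x n ^ (f (j : ℕ) - r j)) *
              (schurP (hsh n r) N n x * alt (fun _ => 0) n x) := by
        intro r hr
        rw [ih (hsh n r) (hsh_antitone hf hr) (fun i hi => hsh_ge (by omega))
          (hsh_vanish hr hN)]
      rw [Finset.sum_congr rfl hterm, hzero, Finset.mul_sum, Finset.sum_mul]
      refine Finset.sum_congr rfl ?_
      intro r hr
      rw [pow_add, ← Finset.prod_pow_eq_pow_sum]
      ring

end TwoLeg

namespace TwoLeg
open Finset Matrix

variable {v : ℂ} {n N : ℕ}

lemma altv (hv : v ≠ 0) (n : ℕ) (u w : ℕ → ℕ) :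
    alt u n (fun i => v ^ (2 * ((i : ℤ) - (w i : ℤ)) + 1)) =
      (∏ i : Fin n, v ^ ((2 * (((i : ℕ) : ℤ) - (w (i : ℕ) : ℤ)) + 1) * ((n : ℤ) - 1))) *
        ((∏ j : Fin n, v ^ (-(((j : ℕ) : ℤ) - (u (j : ℕ) : ℤ)))) *
          Matrix.det (Matrix.of fun i j : Fin n =>
            v ^ (-2 * (((i : ℕ) : ℤ) - (w (i : ℕ) : ℤ)) * (((j : ℕ) : ℤ) - (u (j : ℕ) : ℤ))))) := by
  set P1 : Fin n → ℂ :=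
    fun i => v ^ ((2 * (((i : ℕ) : ℤ) - (w (i : ℕ) : ℤ)) + 1) * ((n : ℤ) - 1)) with hP1
  set P2 : Fin n → ℂ := fun j => v ^ (-(((j : ℕ) : ℤ) - (u (j : ℕ) : ℤ))) with hP2
  set Cm : Matrix (Fin n) (Fin n) ℂ := Matrix.of fun i j : Fin n =>
    v ^ (-2 * (((i : ℕ) : ℤ) - (w (i : ℕ) : ℤ)) * (((j : ℕ) : ℤ) - (u (j : ℕ) : ℤ))) with hCm
  set mid : Matrix (Fin n) (Fin n) ℂ := Matrix.of fun i j : Fin n => P2 j * Cm i j with hmid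
  have h1 : (Matrix.of fun i j : Fin n =>
      (fun i' : ℕ => v ^ (2 * ((i' : ℤ) - (w i' : ℤ)) + 1)) (i : ℕ)
        ^ (u (j : ℕ) + (n - 1 - (j : ℕ))))
      = Matrix.of fun i j : Fin n => P1 i * mid i j := by
    ext i j
    simp only [Matrix.of_apply, hP1, hmid, hP2, hCm]
    rw [← zpow_natCast (v ^ (2 * (((i : ℕ) : ℤ) - (w (i : ℕ) : ℤ)) + 1))
        (u (j : ℕ) + (n - 1 - (j : ℕ))), ← _root_.zpow_mul]
    rw [← zpow_add₀ hv, ← zpow_add₀ hv]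
    congr 1
    have hj : (j : ℕ) < n := j.isLt
    have hcast : ((u (j : ℕ) + (n - 1 - (j : ℕ)) : ℕ) : ℤ)
        = (n : ℤ) - 1 - (((j : ℕ) : ℤ) - (u (j : ℕ) : ℤ)) := by omega
    rw [hcast]
    ring
  show Matrix.det _ = _
  rw [h1, Matrix.det_mul_column P1 mid]
  rw [hmid, Matrix.det_mul_row P2 Cm]

lemma det_sym (n : ℕ) (u w : ℕ → ℕ) :
    Matrix.det (Matrix.of fun i j : Fin n =>
        v ^ (-2 * (((i : ℕ) : ℤ) - (w (i : ℕ) : ℤ)) * (((j : ℕ) : ℤ) - (u (j : ℕ) : ℤ))))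
      = Matrix.det (Matrix.of fun i j : Fin n =>
        v ^ (-2 * (((i : ℕ) : ℤ) - (u (i : ℕ) : ℤ)) * (((j : ℕ) : ℤ) - (w (j : ℕ) : ℤ)))) := by
  rw [← Matrix.det_transpose]
  congr 1
  ext i j
  simp only [Matrix.transpose_apply, Matrix.of_apply]
  congr 1
  ring

lemma alt_triple (hv : v ≠ 0) (n : ℕ) (f g : ℕ → ℕ) :
    alt f n (fun i => v ^ (2 * ((i : ℤ) - (((fun _ : ℕ => (0 : ℕ)) i : ℕ) : ℤ)) + 1)) *
        alt g n (fun i => v ^ (2 * ((i : ℤ) - (f i : ℤ)) + 1)) *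
        alt (fun _ => 0) n (fun i => v ^ (2 * ((i : ℤ) - (g i : ℤ)) + 1)) =
      alt f n (fun i => v ^ (2 * ((i : ℤ) - (g i : ℤ)) + 1)) *
        alt g n (fun i => v ^ (2 * ((i : ℤ) - (((fun _ : ℕ => (0 : ℕ)) i : ℕ) : ℤ)) + 1)) *
        alt (fun _ => 0) n (fun i => v ^ (2 * ((i : ℤ) - (f i : ℤ)) + 1)) := by
  rw [altv hv n f (fun _ => 0), altv hv n g f, altv hv n (fun _ => 0) g,
      altv hv n f g, altv hv n g (fun _ => 0), altv hv n (fun _ => 0) f,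
      det_sym n f (fun _ => 0), det_sym n g f, det_sym n (fun _ => 0) g]
  ring

lemma alt0_ne (hv : v ≠ 0) (habs : ‖v‖ < 1) (w : ℕ → ℕ) (hw : Antitone w) (n : ℕ) :
    alt (fun _ => 0) n (fun i => v ^ (2 * ((i : ℤ) - (w i : ℤ)) + 1)) ≠ 0 := by
  set y : ℕ → ℂ := fun i => v ^ (2 * ((i : ℤ) - (w i : ℤ)) + 1) with hy
  have hyinj : ∀ i j : ℕ, i < j → y i ≠ y j := by
    intro i j hij
    have hzinj : Function.Injective fun m : ℤ => ‖v‖ ^ m :=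
      zpow_right_injective₀ (norm_pos_iff.mpr hv) (ne_of_lt habs)
    intro hc
    have habs2 := congrArg (‖·‖) hc
    simp only [hy] at habs2
    rw [norm_zpow, norm_zpow] at habs2
    have := hzinj habs2
    have hmono : (i : ℤ) - (w i : ℤ) < (j : ℤ) - (w j : ℤ) := by
      have := hw (le_of_lt hij)
      omega
    omega
  have hmat : (Matrix.of fun i j : Fin n =>
      y (i : ℕ) ^ ((fun _ : ℕ => (0 : ℕ)) (j : ℕ) + (n - 1 - (j : ℕ))))
      = (Matrix.vandermonde fun i : Fin n => y (i : ℕ)).submatrix id ⇑(Fin.revPerm) := by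
    ext i j
    simp only [Matrix.of_apply, Matrix.submatrix_apply, Matrix.vandermonde, id_eq,
      Fin.revPerm_apply, Fin.val_rev]
    congr 1
    omega
  show Matrix.det _ ≠ 0
  rw [hmat, Matrix.det_permute', Matrix.det_vandermonde]
  apply mul_ne_zero
  · simp
  · apply Finset.prod_ne_zero_iff.2
    intro i _
    apply Finset.prod_ne_zero_iff.2
    intro j hj
    rw [Finset.mem_Ioi] at hj
    exact sub_ne_zero_of_ne (Ne.symm (hyinj _ _ hj))

lemma schurP_symm (hv : v ≠ 0) (habs : ‖v‖ < 1) (f g : ℕ → ℕ)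
    (hf : Antitone f) (hg : Antitone g) (N : ℕ)
    (hNf : ∀ i, N ≤ i → f i = 0) (hNg : ∀ i, N ≤ i → g i = 0) (n : ℕ) (hn : N ≤ n) :
    schurP f N n (fun i => v ^ (2 * (i : ℤ) + 1)) *
        schurP g N n (fun i => v ^ (2 * ((i : ℤ) - (f i : ℤ)) + 1)) =
      schurP f N n (fun i => v ^ (2 * ((i : ℤ) - (g i : ℤ)) + 1)) *
        schurP g N n (fun i => v ^ (2 * (i : ℤ) + 1)) := by
  have hx0 : (fun i : ℕ => v ^ (2 * (i : ℤ) + 1))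
      = fun i : ℕ => v ^ (2 * ((i : ℤ) - (((fun _ : ℕ => (0 : ℕ)) i : ℕ) : ℤ)) + 1) := by
    funext i
    norm_num
  rw [hx0]
  set x0 : ℕ → ℂ :=
    fun i : ℕ => v ^ (2 * ((i : ℤ) - (((fun _ : ℕ => (0 : ℕ)) i : ℕ) : ℤ)) + 1) with hx0def
  set xf : ℕ → ℂ := fun i : ℕ => v ^ (2 * ((i : ℤ) - (f i : ℤ)) + 1) with hxfdef
  set xg : ℕ → ℂ := fun i : ℕ => v ^ (2 * ((i : ℤ) - (g i : ℤ)) + 1) with hxgdef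
  have hnf : ∀ i, n ≤ i → f i = 0 := fun i hi => hNf i (le_trans hn hi)
  have hng : ∀ i, n ≤ i → g i = 0 := fun i hi => hNg i (le_trans hn hi)
  have e1 := alt_eq x0 N n f hf hnf hNf
  have e2 := alt_eq xf N n g hg hng hNg
  have e3 := alt_eq xg N n f hf hnf hNf
  have e4 := alt_eq x0 N n g hg hng hNg
  have key := alt_triple hv n f g
  rw [← hx0def, ← hxfdef, ← hxgdef] at key
  rw [e1, e2, e3, e4] at key
  have hA1 : alt (fun _ => 0) n x0 ≠ 0 := by
    rw [hx0def]
    exact alt0_ne hv habs (fun _ => 0) antitone_const n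
  have hA2 : alt (fun _ => 0) n xf ≠ 0 := by
    rw [hxfdef]; exact alt0_ne hv habs f hf n
  have hA3 : alt (fun _ => 0) n xg ≠ 0 := by
    rw [hxgdef]; exact alt0_ne hv habs g hg n
  apply mul_right_cancel₀
    (mul_ne_zero hA1 (mul_ne_zero hA2 hA3))
  linear_combination key

end TwoLeg
set_option maxHeartbeats 1000000

namespace TwoLeg
open Finset Filter Topology

variable {f : ℕ → ℕ} {N : ℕ} {T : ℕ × ℕ → ℕ}

lemma summable_pi_prod (φ : ℕ → ℝ) (hφ : Summable φ) (hnn : ∀ t, 0 ≤ φ t) :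
    ∀ k : ℕ, Summable fun m : Fin k → ℕ => ∏ i, φ (m i) := by
  intro k
  induction k with
  | zero => exact (hasSum_fintype _).summable
  | succ k ih =>
      have h1 : (0 : ℕ → ℝ) ≤ φ := fun t => hnn t
      have h2 : (0 : (Fin k → ℕ) → ℝ) ≤ fun m : Fin k → ℕ => ∏ i, φ (m i) :=
        fun m => Finset.prod_nonneg fun i _ => hnn _
      have hsum := Summable.mul_of_nonneg (f := φ)
        (g := fun m : Fin k → ℕ => ∏ i, φ (m i)) hφ ih h1 h2
      set he := (Fin.consEquiv (fun _ : Fin (k + 1) => ℕ)) with hhe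
      refine (Equiv.summable_iff he).1 ?_
      refine hsum.congr fun p => ?_
      show φ p.1 * ∏ i, φ (p.2 i) = ∏ i, φ ((he p) i)
      rw [Fin.prod_univ_succ]
      simp [hhe, Fin.consEquiv]

def TabF (f : ℕ → ℕ) := {T : (ℕ × ℕ) → ℕ // IsSSYT f (fun _ => 0) T}

noncomputable def W (f : ℕ → ℕ) (N : ℕ) (x : ℕ → ℂ) (T : (ℕ × ℕ) → ℕ) : ℂ :=
  ∏ c ∈ cells f N, x (T c)

lemma summable_W (hf : Antitone f) (hN : ∀ i, N ≤ i → f i = 0) (x : ℕ → ℂ)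
    {C r : ℝ} (hC : 0 ≤ C) (hr0 : 0 ≤ r) (hr1 : r < 1)
    (hx : ∀ i, ‖x i‖ ≤ C * r ^ i) :
    Summable fun T : TabF f => W f N x T.1 := by
  classical
  set k := (cells f N).card with hk
  set e2 : {c // c ∈ cells f N} ≃ Fin k := (cells f N).equivFin with he2
  set ι : TabF f → (Fin k → ℕ) := fun T i => T.1 ((e2.symm i) : ℕ × ℕ) with hι
  have hinj : Function.Injective ι := by
    intro T T' h
    apply Subtype.ext
    funext c
    by_cases hc : c ∈ cells f N
    · have := congrFun h (e2 ⟨c, hc⟩)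
      simpa [hι] using this
    · have h' : ¬ c.2 < f c.1 := fun hcc => hc ((mem_cells hf hN).2 hcc)
      exact (ssyt_zero T.2 h').trans (ssyt_zero T'.2 h').symm
  have hG : Summable (fun m : Fin k → ℕ => ∏ i, (C * r ^ (m i))) :=
    summable_pi_prod (fun t => C * r ^ t)
      ((summable_geometric_of_lt_one hr0 hr1).mul_left C)
      (fun t => by positivity) k
  have hGι : Summable (fun T : TabF f => ∏ i, (C * r ^ (ι T i))) := hG.comp_injective hinj
  apply Summable.of_norm_bounded hGι
  intro T
  rw [W, norm_prod]
  have h1 : ∏ c ∈ cells f N, ‖x (T.1 c)‖ ≤ ∏ c ∈ cells f N, (C * r ^ (T.1 c)) := by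
    refine Finset.prod_le_prod (fun c _ => norm_nonneg _) (fun c _ => ?_)
    exact hx (T.1 c)
  have h2 : ∏ c ∈ cells f N, (C * r ^ (T.1 c)) = ∏ i : Fin k, (C * r ^ (ι T i)) := by
    rw [← Finset.prod_attach (cells f N) (fun c => C * r ^ (T.1 c))]
    refine Fintype.prod_equiv e2 _ _ fun c => ?_
    simp [hι]
  rw [← h2]
  exact h1

noncomputable def Ct (f : ℕ → ℕ) (N : ℕ) (T : (ℕ × ℕ) → ℕ) : ℕ →₀ ℕ :=
  ∑ c ∈ cells f N, Finsupp.single (T c) 1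

lemma Ct_apply (v0 : ℕ) :
    Ct f N T v0 = ((cells f N).filter fun c => T c = v0).card := by
  rw [Ct, Finset.sum_apply', Finset.card_filter]
  refine Finset.sum_congr rfl fun c _ => ?_
  rw [Finsupp.single_apply]

lemma hasContent_iff (hf : Antitone f) (hN : ∀ i, N ≤ i → f i = 0)
    (d : ℕ →₀ ℕ) :
    HasContent f (fun _ => 0) T d ↔ Ct f N T = d := by
  have hcard : ∀ v : ℕ,
      Nat.card {c : ℕ × ℕ | (fun _ : ℕ => 0) c.1 ≤ c.2 ∧ c.2 < f c.1 ∧ T c = v}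
        = ((cells f N).filter fun c => T c = v).card := by
    intro v
    have hset : {c : ℕ × ℕ | (fun _ : ℕ => 0) c.1 ≤ c.2 ∧ c.2 < f c.1 ∧ T c = v}
        = ↑((cells f N).filter fun c => T c = v) := by
      ext c
      simp only [Set.mem_setOf_eq, Finset.coe_filter, mem_cells hf hN, Nat.zero_le, true_and]
    rw [hset, Nat.card_coe_set_eq, Set.ncard_coe_finset]
  constructor
  · intro h
    ext v
    rw [Ct_apply, ← hcard v]
    exact (h v).symm
  · intro h v
    rw [← h, Ct_apply, hcard v]

lemma W_eq_mono (x : ℕ → ℂ) {d : ℕ →₀ ℕ} (h : Ct f N T = d) :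
    W f N x T = ∏ i ∈ d.support, x i ^ d i := by
  have hmap : ∀ c ∈ cells f N, T c ∈ d.support := by
    intro c hc
    rw [Finsupp.mem_support_iff, ← h, Ct_apply]
    have hmem : c ∈ (cells f N).filter (fun c' => T c' = T c) :=
      Finset.mem_filter.2 ⟨hc, rfl⟩
    have := Finset.card_pos.2 ⟨c, hmem⟩
    omega
  rw [W, ← Finset.prod_fiberwise_of_maps_to hmap (fun c => x (T c))]
  refine Finset.prod_congr rfl fun v _ => ?_
  have hcongr : ∀ c ∈ (cells f N).filter fun c => T c = v, x (T c) = x v := by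
    intro c hc; rw [(Finset.mem_filter.1 hc).2]
  rw [Finset.prod_congr rfl hcongr, Finset.prod_const, ← Ct_apply, h]

noncomputable def fiberEquiv (hf : Antitone f) (hN : ∀ i, N ≤ i → f i = 0) (d : ℕ →₀ ℕ) :
    {T : TabF f // Ct f N T.1 = d} ≃
      {T : (ℕ × ℕ) → ℕ // IsSSYT f (fun _ => 0) T ∧ HasContent f (fun _ => 0) T d} where
  toFun p := ⟨p.1.1, p.1.2, (hasContent_iff hf hN d).2 p.2⟩
  invFun q := ⟨⟨q.1, q.2.1⟩, (hasContent_iff hf hN d).1 q.2.2⟩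
  left_inv p := rfl
  right_inv q := rfl

lemma finite_fiber (hf : Antitone f) (hN : ∀ i, N ≤ i → f i = 0) (d : ℕ →₀ ℕ) :
    Finite {T : TabF f // Ct f N T.1 = d} := by
  classical
  have hmap : ∀ (T1 : TabF f), Ct f N T1.1 = d → ∀ c : {c // c ∈ cells f N},
      T1.1 (c : ℕ × ℕ) ∈ d.support := by
    intro T1 hp c
    rw [Finsupp.mem_support_iff, ← hp, Ct_apply]
    have hmem : (c : ℕ × ℕ) ∈ (cells f N).filter (fun c' => T1.1 c' = T1.1 (c : ℕ × ℕ)) :=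
      Finset.mem_filter.2 ⟨c.2, rfl⟩
    have := Finset.card_pos.2 ⟨(c : ℕ × ℕ), hmem⟩
    omega
  refine Finite.of_injective
    (fun p => (fun c : {c // c ∈ cells f N} =>
      (⟨p.1.1 c, hmap p.1 p.2 c⟩ : {v // v ∈ d.support})))
    ?_
  intro p p' h
  apply Subtype.ext
  apply Subtype.ext
  funext c
  by_cases hc : c ∈ cells f N
  · have := congrFun h ⟨c, hc⟩
    exact congrArg Subtype.val this
  · have h' : ¬ c.2 < f c.1 := fun hcc => hc ((mem_cells hf hN).2 hcc)
    exact (ssyt_zero p.1.2 h').trans (ssyt_zero p'.1.2 h').symm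

lemma evalS_schur (hf : Antitone f) (hN : ∀ i, N ≤ i → f i = 0) (x : ℕ → ℂ)
    (hsum : Summable fun T : TabF f => W f N x T.1) :
    evalS (schur f) x = ∑' T : TabF f, W f N x T.1 := by
  classical
  set e := (Equiv.sigmaFiberEquiv (fun T : TabF f => Ct f N T.1)) with hedef
  have hsig0 : Summable ((fun T : TabF f => W f N x T.1) ∘ e) :=
    (Equiv.summable_iff (f := fun T : TabF f => W f N x T.1) e).2 hsum
  have hsig : Summable (fun p : Σ d : ℕ →₀ ℕ, {T : TabF f // Ct f N T.1 = d} =>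
      W f N x p.2.1.1) := hsig0.congr fun p => rfl
  have h2 : ∑' T : TabF f, W f N x T.1
      = ∑' (d : ℕ →₀ ℕ) (T : {T : TabF f // Ct f N T.1 = d}), W f N x T.1.1 := by
    rw [← Summable.tsum_sigma (f := fun p : Σ d : ℕ →₀ ℕ, {T : TabF f // Ct f N T.1 = d} =>
      W f N x p.2.1.1) hsig]
    exact (Equiv.tsum_eq e (fun T : TabF f => W f N x T.1)).symm
  rw [h2, evalS]
  refine tsum_congr fun d => ?_
  haveI : Finite {T : TabF f // Ct f N T.1 = d} := finite_fiber hf hN d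
  haveI := Fintype.ofFinite {T : TabF f // Ct f N T.1 = d}
  rw [tsum_fintype]
  have hterm : ∀ p : {T : TabF f // Ct f N T.1 = d},
      W f N x p.1.1 = ∏ i ∈ d.support, x i ^ d i := fun p => W_eq_mono x p.2
  rw [Finset.sum_congr rfl fun p _ => hterm p, Finset.sum_const, Finset.card_univ,
    nsmul_eq_mul]
  congr 1
  rw [schur, skewSchur]
  rw [if_pos (fun i => Nat.zero_le (f i))]
  have hcc : Nat.card {T : (ℕ × ℕ) → ℕ //
      IsSSYT f (fun _ => 0) T ∧ HasContent f (fun _ => 0) T d}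
      = Fintype.card {T : TabF f // Ct f N T.1 = d} := by
    rw [← Nat.card_eq_fintype_card]
    exact Nat.card_congr (fiberEquiv hf hN d).symm
  rw [hcc]
  norm_cast

lemma tendsto_schurP (hf : Antitone f) (hN : ∀ i, N ≤ i → f i = 0) (x : ℕ → ℂ)
    (hsum : Summable fun T : TabF f => W f N x T.1) :
    Filter.Tendsto (fun n => schurP f N n x) Filter.atTop
      (nhds (∑' T : TabF f, W f N x T.1)) := by
  classical
  have hhs := hsum.hasSum
  set s : ℕ → Finset (TabF f) :=
    fun n => (Tabs f N n).subtype (fun T => IsSSYT f (fun _ => 0) T) with hs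
  have hmono : Monotone s := by
    intro a b hab T hT
    have hT2 := (mem_Tabs hf hN).1 ((Finset.mem_subtype (p := fun T => IsSSYT f (fun _ => 0) T)
      (s := Tabs f N a) (a := T)).1 hT)
    exact (Finset.mem_subtype (p := fun T => IsSSYT f (fun _ => 0) T) (s := Tabs f N b) (a := T)).2
      ((mem_Tabs hf hN).2 ⟨hT2.1, fun c hc => lt_of_lt_of_le (hT2.2 c hc) hab⟩)
  have hexh : ∀ T : TabF f, ∃ n, T ∈ s n := by
    intro T
    refine ⟨((cells f N).sup fun c => T.1 c) + 1, ?_⟩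
    exact (Finset.mem_subtype (p := fun T => IsSSYT f (fun _ => 0) T) (s := Tabs f N _) (a := T)).2
      ((mem_Tabs hf hN).2 ⟨T.2, fun c hc => Nat.lt_succ_of_le (Finset.le_sup hc)⟩)
  have htend : Filter.Tendsto s Filter.atTop Filter.atTop :=
    tendsto_atTop_finset_of_monotone hmono hexh
  have hcomp := hhs.comp htend
  refine hcomp.congr fun n => ?_
  show ∑ T ∈ (Tabs f N n).subtype (fun T => IsSSYT f (fun _ => 0) T), W f N x ↑T
    = schurP f N n x
  rw [Finset.sum_subtype_eq_sum_filter]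
  have hfil : (Tabs f N n).filter (fun T => IsSSYT f (fun _ => 0) T) = Tabs f N n := by
    apply Finset.filter_true_of_mem
    intro T hT
    exact ((mem_Tabs hf hN).1 hT).1
  rw [hfil, schurP]
  rfl

end TwoLeg

namespace TwoLeg
open Finset Filter Topology

lemma xw_bound {v q : ℂ} (hv : v ^ 2 = q) (h0 : 0 < ‖q‖) (h1 : ‖q‖ < 1)
    (hvne : v ≠ 0) (w : ℕ → ℕ) (hw : Antitone w) (i : ℕ) :
    ‖v ^ (2 * ((i : ℤ) - (w i : ℤ)) + 1)‖
      ≤ (‖v‖ * ‖q‖ ^ (-((w 0 : ℕ) : ℤ))) * ‖q‖ ^ i := by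
  have hvq : ‖v‖ ^ 2 = ‖q‖ := by rw [← hv, norm_pow]
  have hvpos : 0 < ‖v‖ := norm_pos_iff.mpr hvne
  have hvne' : ‖v‖ ≠ 0 := ne_of_gt hvpos
  have hqne : ‖q‖ ≠ 0 := ne_of_gt h0
  rw [norm_zpow]
  have hsplit : ‖v‖ ^ (2 * ((i : ℤ) - (w i : ℤ)) + 1)
      = ‖v‖ * (‖q‖ ^ (i : ℤ) * ‖q‖ ^ (-(w i : ℤ))) := by
    rw [zpow_add₀ hvne', zpow_one, _root_.zpow_mul]
    have h2 : ‖v‖ ^ (2 : ℤ) = ‖q‖ := by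
      rw [← hvq, show ((2:ℤ)) = ((2:ℕ):ℤ) from rfl, zpow_natCast]
    rw [h2, sub_eq_add_neg, zpow_add₀ hqne]
    ring
  rw [hsplit]
  have hmono : ‖q‖ ^ (-(w i : ℤ)) ≤ ‖q‖ ^ (-((w 0 : ℕ) : ℤ)) := by
    apply (zpow_right_strictAnti₀ h0 h1).antitone
    have := hw (Nat.zero_le i)
    omega
  have hq_i : ‖q‖ ^ (i : ℤ) = ‖q‖ ^ i := zpow_natCast _ _
  rw [hq_i]
  have hqipos : (0:ℝ) ≤ ‖q‖ ^ i := by positivity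
  calc ‖v‖ * (‖q‖ ^ i * ‖q‖ ^ (-(w i : ℤ)))
      ≤ ‖v‖ * (‖q‖ ^ i * ‖q‖ ^ (-((w 0 : ℕ) : ℤ))) := by
        exact mul_le_mul_of_nonneg_left
          (mul_le_mul_of_nonneg_left hmono hqipos) (le_of_lt hvpos)
    _ = (‖v‖ * ‖q‖ ^ (-((w 0 : ℕ) : ℤ))) * ‖q‖ ^ i := by ring

end TwoLeg

/-- Two-legged symmetry identity:
s_α(q^{−ρ}) s_β(q^{−α−ρ}) = s_α(q^{−β−ρ}) s_β(q^{−ρ}), where q^{−ρ} = (q^{i−1/2})_{i≥1}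
and q^{−α−ρ} = (q^{−α_i+i−1/2})_{i≥1}; here v = q^{1/2}. -/
theorem two_legged_identity (v q : ℂ) (hv : v ^ 2 = q)
    (h0 : 0 < ‖q‖) (h1 : ‖q‖ < 1)
    (f g : ℕ → ℕ) (hf : Antitone f) (hffin : (Function.support f).Finite)
    (hg : Antitone g) (hgfin : (Function.support g).Finite) :
    evalS (schur f) (fun i => v ^ (2 * (i : ℤ) + 1)) *
        evalS (schur g) (fun i => v ^ (2 * ((i : ℤ) - (f i : ℤ)) + 1)) =
      evalS (schur f) (fun i => v ^ (2 * ((i : ℤ) - (g i : ℤ)) + 1)) *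
        evalS (schur g) (fun i => v ^ (2 * (i : ℤ) + 1)) := by
  classical
  open TwoLeg Filter Topology in
  obtain ⟨N, hNf, hNg⟩ : ∃ N, (∀ i, N ≤ i → f i = 0) ∧ (∀ i, N ≤ i → g i = 0) := by
    refine ⟨(hffin.toFinset.sup id + 1) ⊔ (hgfin.toFinset.sup id + 1), ?_, ?_⟩ <;>
      intro i hi <;> by_contra hc
    · have hmem : i ∈ hffin.toFinset := hffin.mem_toFinset.2 hc
      have hle := Finset.le_sup (f := id) hmem
      simp only [id_eq, le_sup_iff] at hle hi
      omega
    · have hmem : i ∈ hgfin.toFinset := hgfin.mem_toFinset.2 hc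
      have hle := Finset.le_sup (f := id) hmem
      simp only [id_eq, le_sup_iff] at hle hi
      omega
  have hq0 : q ≠ 0 := fun hc => by simp [hc] at h0
  have hv0 : v ≠ 0 := fun hc => hq0 (by rw [← hv, hc]; ring)
  have hvq : ‖v‖ ^ 2 = ‖q‖ := by rw [← hv, norm_pow]
  have hvpos : 0 < ‖v‖ := norm_pos_iff.mpr hv0
  have hvlt : ‖v‖ < 1 := by nlinarith
  set x0 : ℕ → ℂ := fun i => v ^ (2 * (i : ℤ) + 1) with hx0
  set xf : ℕ → ℂ := fun i => v ^ (2 * ((i : ℤ) - (f i : ℤ)) + 1) with hxf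
  set xg : ℕ → ℂ := fun i => v ^ (2 * ((i : ℤ) - (g i : ℤ)) + 1) with hxg
  have hb0 : ∀ i, ‖x0 i‖
      ≤ (‖v‖ * ‖q‖ ^ (-(((fun _ : ℕ => (0 : ℕ)) 0 : ℕ) : ℤ)))
        * ‖q‖ ^ i := by
    intro i
    have hxb := xw_bound hv h0 h1 hv0 (fun _ => 0) antitone_const i
    have he : (2 * ((i : ℤ) - (((fun _ : ℕ => (0 : ℕ)) i : ℕ) : ℤ)) + 1) = 2 * (i : ℤ) + 1 := by
      norm_num
    rw [he] at hxb
    exact hxb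
  have hbf : ∀ i, ‖xf i‖
      ≤ (‖v‖ * ‖q‖ ^ (-((f 0 : ℕ) : ℤ))) * ‖q‖ ^ i :=
    fun i => xw_bound hv h0 h1 hv0 f hf i
  have hbg : ∀ i, ‖xg i‖
      ≤ (‖v‖ * ‖q‖ ^ (-((g 0 : ℕ) : ℤ))) * ‖q‖ ^ i :=
    fun i => xw_bound hv h0 h1 hv0 g hg i
  have hCpos : ∀ m : ℤ, (0:ℝ) ≤ ‖v‖ * ‖q‖ ^ m := by
    intro m
    have : (0:ℝ) < ‖q‖ ^ m := zpow_pos h0 m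
    positivity
  have hq_nonneg : (0:ℝ) ≤ ‖q‖ := norm_nonneg q
  have hsum_f0 : Summable fun T : TabF f => W f N x0 T.1 :=
    summable_W hf hNf x0 (hCpos _) hq_nonneg h1 hb0
  have hsum_gf : Summable fun T : TabF g => W g N xf T.1 :=
    summable_W hg hNg xf (hCpos _) hq_nonneg h1 hbf
  have hsum_fg : Summable fun T : TabF f => W f N xg T.1 :=
    summable_W hf hNf xg (hCpos _) hq_nonneg h1 hbg
  have hsum_g0 : Summable fun T : TabF g => W g N x0 T.1 :=
    summable_W hg hNg x0 (hCpos _) hq_nonneg h1 hb0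
  rw [evalS_schur hf hNf x0 hsum_f0, evalS_schur hg hNg xf hsum_gf,
      evalS_schur hf hNf xg hsum_fg, evalS_schur hg hNg x0 hsum_g0]
  have t1 := (tendsto_schurP hf hNf x0 hsum_f0).mul (tendsto_schurP hg hNg xf hsum_gf)
  have t2 := (tendsto_schurP hf hNf xg hsum_fg).mul (tendsto_schurP hg hNg x0 hsum_g0)
  have hev : (fun n => schurP f N n x0 * schurP g N n xf)
      =ᶠ[atTop] fun n => schurP f N n xg * schurP g N n x0 := by
    filter_upwards [eventually_ge_atTop N] with n hn
    exact schurP_symm hv0 hvlt f g hf hg N hNf hNg n hn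
  exact tendsto_nhds_unique t1 (t2.congr' hev.symm)
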